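/- Let Ψ : K(ℝ^n) → C(S^{n-1},ℂ)' be weak*-continuous and locally determined. Suppose Ψ(P) = 0 for every polytope P ⊆ ℝ^n (convex hull of a nonempty finite set) whose dimension (the dimension of its affine span) is at most n−1. Then Ψ(K) = 0 for every convex body K ∈ K(ℝ^n). -/

import Mathlib

open scoped RealInnerProductSpace Pointwise
open Metric

noncomputable section

/-- `ℝⁿ` with the Euclidean inner product. -/
abbrev En (n : ℕ) : Type := EuclideanSpace ℝ (Fin n)

/-- The unit sphere `S^{n-1} ⊆ ℝⁿ`. -/
abbrev Sph (n : ℕ) : Type := Metric.sphere (0 : En n) 1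

/-- The support function of a set in `ℝⁿ`. -/
def suppFn {n : ℕ} (A : Set (En n)) (v : En n) : ℝ :=
  sSup ((fun x => ⟪x, v⟫) '' A)

/-- Measure-valued functionals: maps from convex bodies to continuous linear functionals on
`C(S^{n-1}, ℂ)` (identified with finite complex Borel measures by Riesz representation). -/
abbrev AreaFun (n : ℕ) : Type := ConvexBody (En n) → (C(Sph n, ℂ) →L[ℂ] ℂ)

/-- Weak* continuity of a measure-valued functional. -/
def WeakContinuous {n : ℕ} (Ψ : AreaFun n) : Prop :=
  ∀ φ : C(Sph n, ℂ), Continuous fun K : ConvexBody (En n) => Ψ K φ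

/-- A measure-valued functional is locally determined if `Ψ(K;φ) = Ψ(L;φ)` whenever the support
functions of `K` and `L` agree on an open set `U ⊆ S^{n-1}` containing the support of `φ`. -/
def LocallyDetermined {n : ℕ} (Ψ : AreaFun n) : Prop :=
  ∀ (K L : ConvexBody (En n)) (φ : C(Sph n, ℂ)) (U : Set (Sph n)), IsOpen U →
    (∀ v ∈ U, suppFn (K : Set (En n)) (v : En n) = suppFn (L : Set (En n)) (v : En n)) →
    tsupport φ ⊆ U → Ψ K φ = Ψ L φ


lemma suppFn_convexHull {n : ℕ} (S : Finset (En n)) (hS : S.Nonempty) (v : En n) :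
    suppFn (convexHull ℝ (S : Set (En n))) v = S.sup' hS (fun x => ⟪x, v⟫) := by
  have hlin : IsLinearMap ℝ (fun x : En n => ⟪x, v⟫) :=
    ⟨fun a b => inner_add_left a b v, fun c x => real_inner_smul_left x v c⟩
  set M := S.sup' hS (fun x => ⟪x, v⟫) with hM
  have hub : ∀ x ∈ convexHull ℝ (S : Set (En n)), ⟪x, v⟫ ≤ M := by
    intro x hx
    have : convexHull ℝ (S : Set (En n)) ⊆ {x | ⟪x, v⟫ ≤ M} :=
      convexHull_min (fun y hy => show ⟪y, v⟫ ≤ M from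
        Finset.le_sup' (fun x : En n => ⟪x, v⟫) (Finset.mem_coe.mp hy))
        (convex_halfSpace_le hlin M)
    exact this hx
  obtain ⟨x0, hx0S, hx0⟩ := Finset.exists_mem_eq_sup' hS (fun x => ⟪x, v⟫)
  refine le_antisymm ?_ ?_
  · apply csSup_le
    · exact ⟨⟪x0, v⟫, Set.mem_image_of_mem _ (subset_convexHull ℝ _ hx0S)⟩
    · rintro r ⟨x, hx, rfl⟩; exact hub x hx
  · have hMx : M = ⟪x0, v⟫ := hx0
    rw [hMx]
    apply le_csSup
    · exact ⟨M, by rintro r ⟨x, hx, rfl⟩; exact hub x hx⟩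
    · exact Set.mem_image_of_mem _ (subset_convexHull ℝ _ hx0S)

/-- A convex body given by the convex hull of a nonempty finite set. -/
def polyBody {n : ℕ} (S : Finset (En n)) (hS : S.Nonempty) : ConvexBody (En n) where
  carrier := convexHull ℝ (S : Set (En n))
  convex' := convex_convexHull ℝ _
  isCompact' := S.finite_toSet.isCompact_convexHull ℝ
  nonempty' := ⟨hS.choose, subset_convexHull ℝ _ hS.choose_spec⟩

/-- Step A: Ψ vanishes on all polytopes. -/
lemma vanishes_on_polytopes {n : ℕ}
    (Ψ : AreaFun n) (hloc : LocallyDetermined Ψ)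
    (hpoly : ∀ K : ConvexBody (En n),
      (∃ S : Finset (En n), S.Nonempty ∧ (K : Set (En n)) = convexHull ℝ (S : Set (En n))) →
      Module.finrank ℝ (vectorSpan ℝ (K : Set (En n))) ≤ n - 1 →
      ∀ φ : C(Sph n, ℂ), Ψ K φ = 0)
    (S : Finset (En n)) (hS : S.Nonempty) (P : ConvexBody (En n))
    (hP : (P : Set (En n)) = convexHull ℝ (S : Set (En n)))
    (φ : C(Sph n, ℂ)) : Ψ P φ = 0 := by
  classical
  -- the maximizer face of `S` in direction `u`
  set T : Sph n → Finset (En n) :=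
    fun u => S.filter (fun x => ⟪x, (u : En n)⟫ = S.sup' hS (fun x => ⟪x, (u : En n)⟫)) with hT
  have hTne : ∀ u, (T u).Nonempty := by
    intro u
    obtain ⟨x0, hx0S, hx0⟩ := Finset.exists_mem_eq_sup' hS (fun x => ⟪x, (u : En n)⟫)
    exact ⟨x0, Finset.mem_filter.mpr ⟨hx0S, hx0.symm⟩⟩
  have hTsub : ∀ u, T u ⊆ S := fun u => Finset.filter_subset _ _
  -- the open region where the face `T u` dominates
  set V : Sph n → Set (Sph n) := fun u =>
    ⋂ x ∈ S \ T u, ⋃ y ∈ T u, {w : Sph n | ⟪x, (w : En n)⟫ < ⟪y, (w : En n)⟫} with hV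
  have hVopen : ∀ u, IsOpen (V u) := by
    intro u
    apply isOpen_biInter_finset
    intro x _
    apply isOpen_biUnion
    intro y _
    exact isOpen_lt (Continuous.inner continuous_const continuous_subtype_val)
      (Continuous.inner continuous_const continuous_subtype_val)
  have hmemV : ∀ u w, w ∈ V u ↔ ∀ x ∈ S, x ∉ T u →
      ∃ y ∈ T u, ⟪x, (w : En n)⟫ < ⟪y, (w : En n)⟫ := by
    intro u w
    simp only [hV, Set.mem_iInter, Set.mem_iUnion, Finset.mem_sdiff, Set.mem_setOf_eq]
    constructor
    · intro h x hxS hxT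
      obtain ⟨y, hy, hlt⟩ := h x ⟨hxS, hxT⟩
      exact ⟨y, hy, hlt⟩
    · rintro h x ⟨hxS, hxT⟩
      obtain ⟨y, hy, hlt⟩ := h x hxS hxT
      exact ⟨y, hy, hlt⟩
  have hcover : ∀ u : Sph n, u ∈ V u := by
    intro u
    rw [hmemV]
    intro x hxS hxT
    obtain ⟨y, hy⟩ := hTne u
    refine ⟨y, hy, ?_⟩
    have hyM : ⟪y, (u : En n)⟫ = S.sup' hS (fun x => ⟪x, (u : En n)⟫) :=
      (Finset.mem_filter.mp hy).2
    have hxle : ⟪x, (u : En n)⟫ ≤ S.sup' hS (fun x => ⟪x, (u : En n)⟫) :=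
      Finset.le_sup' (fun x : En n => ⟪x, (u : En n)⟫) hxS
    have hxne : ⟪x, (u : En n)⟫ ≠ S.sup' hS (fun x => ⟪x, (u : En n)⟫) := by
      intro heq
      exact hxT (Finset.mem_filter.mpr ⟨hxS, heq⟩)
    rw [hyM]
    exact lt_of_le_of_ne hxle hxne
  -- on `V u`, the support function of `P` equals that of the face
  have hsupp_eq : ∀ u : Sph n, ∀ w ∈ V u,
      suppFn (P : Set (En n)) (w : En n) =
        suppFn (convexHull ℝ ((T u : Finset (En n)) : Set (En n))) (w : En n) := by
    intro u w hw
    rw [hP, suppFn_convexHull S hS, suppFn_convexHull (T u) (hTne u)]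
    apply le_antisymm
    · apply Finset.sup'_le
      intro x hxS
      by_cases hxT : x ∈ T u
      · exact Finset.le_sup' (fun x : En n => ⟪x, (w : En n)⟫) hxT
      · obtain ⟨y, hy, hlt⟩ := (hmemV u w).mp hw x hxS hxT
        exact le_trans hlt.le (Finset.le_sup' (fun x : En n => ⟪x, (w : En n)⟫) hy)
    · exact Finset.sup'_le _ _ (fun y hy => Finset.le_sup' (fun x : En n => ⟪x, (w : En n)⟫) (hTsub u hy))
  -- the faces are lower-dimensional polytopes, so Ψ vanishes on them
  have hface : ∀ u : Sph n, ∀ ψ : C(Sph n, ℂ), Ψ (polyBody (T u) (hTne u)) ψ = 0 := by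
    intro u ψ
    apply hpoly
    · exact ⟨T u, hTne u, rfl⟩
    · -- dimension bound
      have hune : (u : En n) ≠ 0 := ne_of_mem_sphere u.2 one_ne_zero
      have hle : vectorSpan ℝ ((polyBody (T u) (hTne u) : Set (En n))) ≤
          (ℝ ∙ (u : En n))ᗮ := by
        show vectorSpan ℝ (convexHull ℝ ((T u : Finset (En n)) : Set (En n))) ≤ _
        rw [← direction_affineSpan, affineSpan_convexHull, direction_affineSpan, vectorSpan_def]
        rw [Submodule.span_le]
        rintro v ⟨x, hx, y, hy, rfl⟩
        rw [SetLike.mem_coe, Submodule.mem_orthogonal_singleton_iff_inner_right]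
        have hx' : ⟪x, (u : En n)⟫ = S.sup' hS (fun x => ⟪x, (u : En n)⟫) :=
          (Finset.mem_filter.mp (Finset.mem_coe.mp hx)).2
        have hy' : ⟪y, (u : En n)⟫ = S.sup' hS (fun x => ⟪x, (u : En n)⟫) :=
          (Finset.mem_filter.mp (Finset.mem_coe.mp hy)).2
        have : ⟪x - y, (u : En n)⟫ = 0 := by
          rw [inner_sub_left, hx', hy', sub_self]
        rw [real_inner_comm] at this
        simpa using this
      have horth : Module.finrank ℝ ((ℝ ∙ (u : En n))ᗮ) = n - 1 := by
        have h1 : Module.finrank ℝ (ℝ ∙ (u : En n)) = 1 := finrank_span_singleton hune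
        have h2 := Submodule.finrank_add_finrank_orthogonal (K := (ℝ ∙ (u : En n)))
        rw [h1, finrank_euclideanSpace_fin] at h2
        omega
      calc Module.finrank ℝ (vectorSpan ℝ ((polyBody (T u) (hTne u) : Set (En n))))
          ≤ Module.finrank ℝ ((ℝ ∙ (u : En n))ᗮ) := Submodule.finrank_mono hle
        _ = n - 1 := horth
  -- extract a finite subcover of the sphere
  obtain ⟨t, ht⟩ := isCompact_univ.elim_finite_subcover V hVopen
    (fun u _ => Set.mem_iUnion.mpr ⟨u, hcover u⟩)
  -- partition of unity subordinate to it
  obtain ⟨f, hf⟩ := PartitionOfUnity.exists_isSubordinate (ι := {u // u ∈ t})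
    (s := (Set.univ : Set (Sph n))) isClosed_univ (fun i => V i)
    (fun i => hVopen i) (by
      intro x _
      obtain ⟨u, hu⟩ := Set.mem_iUnion₂.mp (ht (Set.mem_univ x))
      exact Set.mem_iUnion.mpr ⟨⟨u, hu.1⟩, hu.2⟩)
  -- split φ using the partition of unity
  set g : {u // u ∈ t} → C(Sph n, ℂ) := fun i =>
    φ * ⟨fun x => ((f i x : ℝ) : ℂ), by fun_prop⟩ with hg
  have hgsum : ∑ i : {u // u ∈ t}, g i = φ := by
    ext x
    have h1 : ∑ᶠ i, f i x = 1 := f.sum_eq_one (Set.mem_univ x)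
    rw [finsum_eq_sum_of_fintype] at h1
    simp only [ContinuousMap.coe_sum, Finset.sum_apply, hg, ContinuousMap.mul_apply,
      ContinuousMap.coe_mk]
    rw [← Finset.mul_sum]
    have : ∑ i : {u // u ∈ t}, ((f i x : ℝ) : ℂ) = ((∑ i : {u // u ∈ t}, f i x : ℝ) : ℂ) := by
      push_cast; rfl
    rw [this, h1]
    simp
  have hgsupp : ∀ i : {u // u ∈ t}, tsupport (g i) ⊆ V i := by
    intro i
    refine subset_trans ?_ (hf i)
    apply closure_mono
    intro x hx
    simp only [hg, Function.mem_support, ContinuousMap.mul_apply, ContinuousMap.coe_mk] at hx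
    intro h0
    apply hx
    rw [h0]
    simp
  calc Ψ P φ = Ψ P (∑ i : {u // u ∈ t}, g i) := by rw [hgsum]
    _ = ∑ i : {u // u ∈ t}, Ψ P (g i) := map_sum _ _ _
    _ = ∑ i : {u // u ∈ t}, (0 : ℂ) := by
        apply Finset.sum_congr rfl
        intro i _
        rw [hloc P (polyBody (T i) (hTne i)) (g i) (V i) (hVopen i)
          (fun v hv => hsupp_eq i v hv) (hgsupp i)]
        exact hface i (g i)
    _ = 0 := by simp

/-- A weak*-continuous, locally determined measure-valued functional vanishing on
all polytopes of dimension at most `n-1` vanishes identically. -/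
theorem vanishes_of_vanishes_on_lower_dim_polytopes (n : ℕ) (hn : 1 ≤ n)
    (Ψ : AreaFun n) (hcont : WeakContinuous Ψ) (hloc : LocallyDetermined Ψ)
    (hpoly : ∀ K : ConvexBody (En n),
      (∃ S : Finset (En n), S.Nonempty ∧ (K : Set (En n)) = convexHull ℝ (S : Set (En n))) →
      Module.finrank ℝ (vectorSpan ℝ (K : Set (En n))) ≤ n - 1 →
      ∀ φ : C(Sph n, ℂ), Ψ K φ = 0) :
    ∀ (K : ConvexBody (En n)) (φ : C(Sph n, ℂ)), Ψ K φ = 0 := by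
  intro K φ
  classical
  have happrox : ∀ ε : ℝ, 0 < ε → ∃ P : ConvexBody (En n),
      (∀ ψ : C(Sph n, ℂ), Ψ P ψ = 0) ∧ dist P K ≤ ε := by
    intro ε hε
    obtain ⟨b', hb'sub, hb'fin, hb'cov⟩ := K.isCompact.elim_finite_subcover_image
      (b := (K : Set (En n))) (c := fun x => ball x ε)
      (fun x _ => isOpen_ball)
      (fun x hx => Set.mem_biUnion hx (mem_ball_self hε))
    have hSne : hb'fin.toFinset.Nonempty := by
      obtain ⟨x, hx⟩ := K.nonempty
      obtain ⟨c, hc, _⟩ := Set.mem_iUnion₂.mp (hb'cov hx)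
      exact ⟨c, hb'fin.mem_toFinset.mpr hc⟩
    refine ⟨polyBody hb'fin.toFinset hSne, ?_, ?_⟩
    · intro ψ
      exact vanishes_on_polytopes Ψ hloc hpoly hb'fin.toFinset hSne _ rfl ψ
    · have hPK : (polyBody hb'fin.toFinset hSne : Set (En n)) ⊆ (K : Set (En n)) := by
        show convexHull ℝ _ ⊆ _
        rw [hb'fin.coe_toFinset]
        exact convexHull_min hb'sub K.convex
      rw [← ConvexBody.hausdorffDist_coe]
      apply hausdorffDist_le_of_mem_dist hε.le
      · intro x hx
        exact ⟨x, hPK hx, by simpa using hε.le⟩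
      · intro x hx
        obtain ⟨c, hc, hxc⟩ := Set.mem_iUnion₂.mp (hb'cov hx)
        refine ⟨c, ?_, (mem_ball.mp hxc).le⟩
        exact subset_convexHull ℝ _ (by
          rw [hb'fin.coe_toFinset]; exact hc)
  have hseq : ∀ m : ℕ, ∃ P : ConvexBody (En n),
      (∀ ψ : C(Sph n, ℂ), Ψ P ψ = 0) ∧ dist P K ≤ 1 / (m + 1) := by
    intro m
    exact happrox (1 / (m + 1)) (by positivity)
  choose P hP0 hPd using hseq
  have htend : Filter.Tendsto P Filter.atTop (nhds K) := by
    apply tendsto_iff_dist_tendsto_zero.2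
    exact squeeze_zero (fun m => dist_nonneg) hPd tendsto_one_div_add_atTop_nhds_zero_nat
  have h2 : Filter.Tendsto (fun m => Ψ (P m) φ) Filter.atTop (nhds (Ψ K φ)) :=
    ((hcont φ).tendsto K).comp htend
  have h3 : Filter.Tendsto (fun m => Ψ (P m) φ) Filter.atTop (nhds 0) := by
    simp only [fun m => hP0 m φ]
    exact tendsto_const_nhds
  exact tendsto_nhds_unique h2 h3
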